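/- Let p be a prime, n even, m ≤ n/2 positive integers, V = V_n an n-dimensional and W = V_m an m-dimensional F_p-vector space. Let F : V → W be a vectorial bent function such that every component function F_c (c ∈ W, c ≠ 0) is weakly regular with the same sign ε ∈ {±1}, and suppose there are functions G : V → W and h : V → F_p with (F_c)*(x) = ⟨c, G(x)⟩ + h(x) for all c ≠ 0 and x ∈ V. Then for every a ∈ V and i ∈ W, the character sum over the fiber D_{F,i} = F^{-1}(i) satisfies χ_a(D_{F,i}) = p^{n−m}·[a = 0] + ε p^{n/2−m} ζ_p^{h(−a)} (p^m·[G(−a) = i] − 1). -/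

import Mathlib

namespace Stmt9Aux
open Finset

variable (p : ℕ) [NeZero p]

noncomputable def e (t : ZMod p) : ℂ := Complex.exp (2 * Real.pi * Complex.I / p) ^ t.val

lemma prim : IsPrimitiveRoot (Complex.exp (2 * Real.pi * Complex.I / p)) p :=
  Complex.isPrimitiveRoot_exp p (NeZero.ne p)

lemma pow_mod (k : ℕ) :
    Complex.exp (2 * Real.pi * Complex.I / p) ^ (k % p) =
    Complex.exp (2 * Real.pi * Complex.I / p) ^ k := by
  conv_rhs => rw [← Nat.mod_add_div k p]
  rw [pow_add, pow_mul, (prim p).pow_eq_one, one_pow, mul_one]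

lemma e_add (s t : ZMod p) : e p (s + t) = e p s * e p t := by
  unfold e
  rw [ZMod.val_add, pow_mod, pow_add]

omit [NeZero p] in
lemma e_zero : e p 0 = 1 := by
  unfold e; rw [ZMod.val_zero, pow_zero]

lemma e_eq_one_iff (t : ZMod p) : e p t = 1 ↔ t = 0 := by
  unfold e
  rw [(prim p).pow_eq_one_iff_dvd]
  constructor
  · intro hd
    exact (ZMod.val_eq_zero t).mp (Nat.eq_zero_of_dvd_of_lt hd (ZMod.val_lt t))
  · rintro rfl; simp

lemma sum_e_eq_zero {G : Type*} [AddCommGroup G] [Fintype G] (ψ : G →+ ZMod p)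
    (hψ : ∃ y, ψ y ≠ 0) : ∑ x : G, e p (ψ x) = 0 := by
  obtain ⟨y, hy⟩ := hψ
  have key : ∑ x : G, e p (ψ x) = e p (ψ y) * ∑ x : G, e p (ψ x) := by
    rw [Finset.mul_sum, ← Equiv.sum_comp (Equiv.addLeft y) (fun x => e p (ψ x))]
    refine Finset.sum_congr rfl fun x _ => ?_
    simp only [Equiv.coe_addLeft, map_add, e_add]
  have h1 : e p (ψ y) - 1 ≠ 0 := by
    intro hcon
    exact hy ((e_eq_one_iff p _).mp (sub_eq_zero.mp hcon))
  have h2 : (e p (ψ y) - 1) * ∑ x : G, e p (ψ x) = 0 := by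
    rw [sub_mul, one_mul, ← key, sub_self]
  exact (mul_eq_zero.mp h2).resolve_left h1

end Stmt9Aux

open Stmt9Aux

/-- Let `F : V → W` be a vectorial bent function (`dim V = n` even,
`dim W = m ≤ n/2`) all of whose component functions `F_c` (`c ≠ 0`) are weakly regular
with the same sign `ε` and duals `(F_c)*(x) = ⟨c, G(x)⟩ + h(x)`. Then for all `a ∈ V`,
`i ∈ W`:
`χ_a(F⁻¹(i)) = p^{n−m}·[a = 0] + ε p^{n/2−m} ζ_p^{h(−a)} (p^m·[G(−a) = i] − 1)`. -/
theorem stmt9 (p n m : ℕ) [Fact p.Prime] [NeZero p] (hn : Even n) (hm : 0 < m)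
    (hmn : m ≤ n / 2)
    (V W : Type*) [AddCommGroup V] [Module (ZMod p) V] [Fintype V] [DecidableEq V]
    [AddCommGroup W] [Module (ZMod p) W] [Fintype W] [DecidableEq W]
    (hcV : Fintype.card V = p ^ n) (hcW : Fintype.card W = p ^ m)
    (φV : V →ₗ[ZMod p] V →ₗ[ZMod p] ZMod p)
    (hndV : ∀ v : V, (∀ w : V, φV v w = 0) → v = 0)
    (φW : W →ₗ[ZMod p] W →ₗ[ZMod p] ZMod p)
    (hndW : ∀ v : W, (∀ w : W, φW v w = 0) → v = 0)
    (F G : V → W) (h : V → ZMod p) (ε : ℂ) (hε : ε = 1 ∨ ε = -1)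
    (hW : ∀ c : W, c ≠ 0 → ∀ a : V,
      ∑ x : V, Complex.exp (2 * Real.pi * Complex.I / p) ^ ((φW c (F x) - φV a x).val) =
        ε * (p : ℂ) ^ (n / 2) *
          Complex.exp (2 * Real.pi * Complex.I / p) ^ ((φW c (G a) + h a).val)) :
    ∀ (a : V) (i : W),
      ∑ x ∈ Finset.univ.filter (fun x : V => F x = i),
          Complex.exp (2 * Real.pi * Complex.I / p) ^ ((φV a x).val) =
        (p : ℂ) ^ (n - m) * (if a = 0 then 1 else 0) +
          ε * (p : ℂ) ^ (n / 2 - m) *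
            Complex.exp (2 * Real.pi * Complex.I / p) ^ ((h (-a)).val) *
            ((p : ℂ) ^ m * (if G (-a) = i then 1 else 0) - 1) := by
  classical
  have hW' : ∀ c : W, c ≠ 0 → ∀ a : V,
      (∑ x : V, e p (φW c (F x) - φV a x)) =
        ε * (p : ℂ) ^ (n / 2) * e p (φW c (G a) + h a) := hW
  clear hW
  intro a i
  show (∑ x ∈ Finset.univ.filter (fun x : V => F x = i), e p (φV a x)) =
        (p : ℂ) ^ (n - m) * (if a = 0 then 1 else 0) +
          ε * (p : ℂ) ^ (n / 2 - m) * e p (h (-a)) *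
            ((p : ℂ) ^ m * (if G (-a) = i then 1 else 0) - 1)
  have hp : (p : ℂ) ≠ 0 := Nat.cast_ne_zero.mpr (NeZero.ne p)
  -- right kernel of φW is trivial
  have hK : ∀ w : W, (∀ c : W, φW c w = 0) → w = 0 := by
    set K : Finset W := Finset.univ.filter (fun w => ∀ c : W, φW c w = 0) with hKdef
    have hsumw : ∀ w : W, (∑ c : W, e p (φW c w)) = if w ∈ K then ((p:ℂ)^m) else 0 := by
      intro w
      by_cases hw : ∀ c : W, φW c w = 0
      · rw [if_pos (by simp [hKdef, hw])]
        simp only [hw, e_zero]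
        rw [Finset.sum_const, Finset.card_univ, hcW]
        push_cast; ring
      · rw [if_neg (by simp only [hKdef, Finset.mem_filter, Finset.mem_univ, true_and]; exact hw)]
        push_neg at hw
        exact sum_e_eq_zero p (φW.flip w).toAddMonoidHom (by simpa using hw)
    have hsumc : ∀ c : W, (∑ w : W, e p (φW c w)) = if c = 0 then ((p:ℂ)^m) else 0 := by
      intro c
      by_cases hc : c = 0
      · subst hc
        rw [if_pos rfl]
        simp only [map_zero, LinearMap.zero_apply, e_zero]
        rw [Finset.sum_const, Finset.card_univ, hcW]
        push_cast; ring
      · rw [if_neg hc]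
        apply sum_e_eq_zero p (φW c).toAddMonoidHom
        by_contra hcon; push_neg at hcon
        exact hc (hndW c (by simpa using hcon))
    have h1 : (∑ c : W, ∑ w : W, e p (φW c w)) = (p:ℂ)^m := by
      simp only [hsumc]
      simp
    have h2 : (∑ c : W, ∑ w : W, e p (φW c w)) = (p:ℂ)^m * K.card := by
      rw [Finset.sum_comm]
      simp only [hsumw]
      rw [Finset.sum_ite_mem, Finset.univ_inter, Finset.sum_const, nsmul_eq_mul, mul_comm]
    have hcard' : K.card = 1 := by
      have hpm : ((p:ℂ)^m) ≠ 0 := pow_ne_zero _ hp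
      have := h1.symm.trans h2
      field_simp at this
      exact_mod_cast this.symm
    intro w hw
    have hwK : w ∈ K := by simp only [hKdef, Finset.mem_filter, Finset.mem_univ, true_and]; exact hw
    have h0K : (0 : W) ∈ K := by simp [hKdef]
    obtain ⟨x, hx⟩ := Finset.card_eq_one.mp hcard'
    rw [hx, Finset.mem_singleton] at hwK h0K
    rw [hwK, h0K]
  have horthW : ∀ w : W, (∑ c : W, e p (φW c w)) = if w = 0 then ((p:ℂ)^m) else 0 := by
    intro w
    by_cases hw : w = 0
    · subst hw
      rw [if_pos rfl]
      simp only [map_zero, e_zero]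
      rw [Finset.sum_const, Finset.card_univ, hcW]
      push_cast; ring
    · rw [if_neg hw]
      apply sum_e_eq_zero p (φW.flip w).toAddMonoidHom
      by_contra hcon; push_neg at hcon
      exact hw (hK w (by simpa using hcon))
  have hV : (∑ x : V, e p (φV a x)) = (p:ℂ)^n * (if a = 0 then 1 else 0) := by
    by_cases ha : a = 0
    · subst ha
      rw [if_pos rfl, mul_one]
      simp only [map_zero, LinearMap.zero_apply, e_zero]
      rw [Finset.sum_const, Finset.card_univ, hcV]
      push_cast; ring
    · rw [if_neg ha, mul_zero]
      apply sum_e_eq_zero p (φV a).toAddMonoidHom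
      by_contra hcon; push_neg at hcon
      exact ha (hndV a (by simpa using hcon))
  set w0 : W := G (-a) - i with hw0
  have hpart : (∑ c ∈ Finset.univ \ {(0:W)}, e p (φW c w0)) =
      (p:ℂ)^m * (if G (-a) = i then 1 else 0) - 1 := by
    have hsplit := Finset.sum_eq_sum_sdiff_singleton_add (Finset.mem_univ (0:W))
      (fun c => e p (φW c w0))
    rw [horthW w0] at hsplit
    have h0 : e p (φW (0:W) w0) = 1 := by
      simp only [map_zero, LinearMap.zero_apply, e_zero]
    simp only [h0] at hsplit
    have hiff : (if w0 = 0 then ((p:ℂ)^m) else 0) = (p:ℂ)^m * (if G (-a) = i then 1 else 0) := by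
      by_cases hgi : G (-a) = i <;> simp [hw0, sub_eq_zero, hgi]
    rw [hiff] at hsplit
    linear_combination (-1 : ℂ) * hsplit
  have key : (p:ℂ)^m * (∑ x ∈ Finset.univ.filter (fun x : V => F x = i), e p (φV a x)) =
      (p:ℂ)^n * (if a = 0 then 1 else 0) +
        ε * (p:ℂ)^(n/2) * e p (h (-a)) * ((p:ℂ)^m * (if G (-a) = i then 1 else 0) - 1) := by
    have step1 : (p:ℂ)^m * (∑ x ∈ Finset.univ.filter (fun x : V => F x = i), e p (φV a x)) =
        ∑ x : V, (∑ c : W, e p (φW c (F x - i))) * e p (φV a x) := by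
      rw [Finset.sum_filter, Finset.mul_sum]
      refine Finset.sum_congr rfl fun x _ => ?_
      rw [horthW (F x - i)]
      by_cases hx : F x = i
      · simp [hx]
      · rw [if_neg hx, if_neg (by simpa [sub_eq_zero] using hx)]
        ring
    have step2 : ∑ x : V, (∑ c : W, e p (φW c (F x - i))) * e p (φV a x) =
        ∑ c : W, (e p (-(φW c i)) * ∑ x : V, e p (φW c (F x) - φV (-a) x)) := by
      simp only [Finset.sum_mul]
      rw [Finset.sum_comm]
      refine Finset.sum_congr rfl fun c _ => ?_
      rw [Finset.mul_sum]
      refine Finset.sum_congr rfl fun x _ => ?_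
      rw [← e_add, ← e_add]
      congr 1
      have h1 : φV (-a) x = -(φV a x) := by simp
      rw [map_sub, h1]
      ring
    have hsplit := Finset.sum_eq_sum_sdiff_singleton_add (Finset.mem_univ (0:W))
      (fun c => e p (-(φW c i)) * ∑ x : V, e p (φW c (F x) - φV (-a) x))
    have hzero : e p (-(φW (0:W) i)) * (∑ x : V, e p (φW (0:W) (F x) - φV (-a) x)) =
        (p:ℂ)^n * (if a = 0 then 1 else 0) := by
      have harg : ∀ x : V, φW (0:W) (F x) - φV (-a) x = φV a x := by
        intro x; simp
      have hsum2 : (∑ x : V, e p (φW (0:W) (F x) - φV (-a) x)) = ∑ x : V, e p (φV a x) :=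
        Finset.sum_congr rfl fun x _ => by rw [harg x]
      rw [hsum2, hV]
      simp [e_zero]
    have hrest : (∑ c ∈ Finset.univ \ {(0:W)},
          e p (-(φW c i)) * ∑ x : V, e p (φW c (F x) - φV (-a) x)) =
        ε * (p:ℂ)^(n/2) * e p (h (-a)) * ((p:ℂ)^m * (if G (-a) = i then 1 else 0) - 1) := by
      rw [← hpart, Finset.mul_sum]
      refine Finset.sum_congr rfl fun c hc => ?_
      have hc0 : c ≠ 0 := by
        simpa using (Finset.mem_sdiff.mp hc).2
      rw [hW' c hc0 (-a)]
      have harg : φW c (G (-a)) + h (-a) = h (-a) + (φW c w0 + φW c i) := by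
        rw [hw0, map_sub]; ring
      rw [harg, e_add, e_add]
      have hcan : e p (-(φW c i)) * e p (φW c i) = 1 := by
        rw [← e_add]; simp [e_zero]
      calc e p (-(φW c i)) * (ε * (p:ℂ)^(n/2) * (e p (h (-a)) * (e p (φW c w0) * e p (φW c i))))
          = (e p (-(φW c i)) * e p (φW c i)) * (ε * (p:ℂ)^(n/2) * e p (h (-a)) * e p (φW c w0)) := by ring
        _ = ε * (p:ℂ)^(n/2) * e p (h (-a)) * e p (φW c w0) := by rw [hcan, one_mul]
    rw [step1, step2, hsplit, hrest, hzero]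
    ring
  refine mul_left_cancel₀ (pow_ne_zero m hp) ?_
  rw [key]
  have e1 : (p:ℂ)^m * ((p:ℂ)^(n-m)) = (p:ℂ)^n := by
    rw [← pow_add]; congr 1; omega
  have e2 : (p:ℂ)^m * ((p:ℂ)^(n/2-m)) = (p:ℂ)^(n/2) := by
    rw [← pow_add]; congr 1; omega
  linear_combination (-(if a = 0 then (1:ℂ) else 0)) * e1 -
    (ε * e p (h (-a)) * ((p:ℂ)^m * (if G (-a) = i then 1 else 0) - 1)) * e2
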